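/- One-step decoupling: Let X_1,...,X_n be {0,1}-valued 1-negatively associated random variables, let f : {0,1}^n → ℝ be monotone non-decreasing and submodular, and let λ < 0. Let X_1* be independent of (X_2,...,X_n) with the same marginal distribution as X_1. Then E[exp(λ·f(X_1,X_2,...,X_n))] ≤ E[exp(λ·f(X_1*,X_2,...,X_n))]. -/

import Mathlib

open MeasureTheory ProbabilityTheory Real Finset

/-- A vector is binary if each coordinate is 0 or 1. -/
def BinaryVec {m : ℕ} (x : Fin m → ℝ) : Prop := ∀ i, x i = 0 ∨ x i = 1

/-- Monotone non-decreasing on the Boolean cube. -/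
def MonoCube {m : ℕ} (f : (Fin m → ℝ) → ℝ) : Prop :=
  ∀ x y : Fin m → ℝ, BinaryVec x → BinaryVec y → x ≤ y → f x ≤ f y

/-- Submodular on the Boolean cube: marginal gains are coordinatewise non-increasing. -/
def SubmodCube {m : ℕ} (f : (Fin m → ℝ) → ℝ) : Prop :=
  ∀ (i : Fin m) (x y : Fin m → ℝ), BinaryVec x → BinaryVec y → x ≤ y →
    f (Function.update y i 1) - f (Function.update y i 0) ≤
      f (Function.update x i 1) - f (Function.update x i 0)

/-- Supermodular on the Boolean cube: marginal gains are coordinatewise non-decreasing. -/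
def SupermodCube {m : ℕ} (f : (Fin m → ℝ) → ℝ) : Prop :=
  ∀ (i : Fin m) (x y : Fin m → ℝ), BinaryVec x → BinaryVec y → x ≤ y →
    f (Function.update x i 1) - f (Function.update x i 0) ≤
      f (Function.update y i 1) - f (Function.update y i 0)

/-- 1-negative association for binary random variables: for every coordinate `i`,
every monotone `F` depending only on coordinates `≠ i` and every monotone `G` of `X i`,
`E[F·G] ≤ E[F]·E[G]`. -/
def OneNA {Ω : Type*} [MeasurableSpace Ω] (μ : Measure Ω) {m : ℕ} (X : Fin m → Ω → ℝ) : Prop :=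
  ∀ (i : Fin m) (F : (Fin m → ℝ) → ℝ) (G : ℝ → ℝ),
    Measurable F → MonoCube F →
    (∀ x y : Fin m → ℝ, (∀ j, j ≠ i → x j = y j) → F x = F y) →
    Measurable G → Monotone G →
    ∫ ω, F (fun j => X j ω) * G (X i ω) ∂μ ≤
      (∫ ω, F (fun j => X j ω) ∂μ) * ∫ ω, G (X i ω) ∂μ

lemma key_ineq (l a0 a1 b0 b1 : ℝ) (hl : l < 0) (hb : b0 ≤ b1) (h0 : a0 ≤ b0)
    (hsub : b1 - b0 ≤ a1 - a0) :
    Real.exp (l * a1) - Real.exp (l * a0) ≤ Real.exp (l * b1) - Real.exp (l * b0) := by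
  have e1 : Real.exp (l * a1) = Real.exp (l * a0) * Real.exp (l * (a1 - a0)) := by
    rw [← Real.exp_add]; ring_nf
  have e2 : Real.exp (l * b1) = Real.exp (l * b0) * Real.exp (l * (b1 - b0)) := by
    rw [← Real.exp_add]; ring_nf
  have h1 : Real.exp (l * (a1 - a0)) ≤ Real.exp (l * (b1 - b0)) :=
    Real.exp_le_exp.mpr (by nlinarith)
  have h2 : Real.exp (l * (b1 - b0)) ≤ 1 := Real.exp_le_one_iff.mpr (by nlinarith)
  have h3 : Real.exp (l * b0) ≤ Real.exp (l * a0) := Real.exp_le_exp.mpr (by nlinarith)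
  have p1 := Real.exp_pos (l * a0)
  have p2 := Real.exp_pos (l * b0)
  rw [e1, e2]
  nlinarith [mul_le_mul_of_nonneg_left h1 p1.le,
    mul_le_mul_of_nonneg_right h3 (neg_nonneg.mpr (sub_nonpos.mpr h2))]

lemma binary_update {m : ℕ} (x : Fin m → ℝ) (i : Fin m) (c : ℝ) (hx : BinaryVec x)
    (hc : c = 0 ∨ c = 1) : BinaryVec (Function.update x i c) := by
  intro j
  by_cases h : j = i
  · subst h; simpa using hc
  · rw [Function.update_of_ne h]; exact hx j

lemma update_le_update {m : ℕ} (x y : Fin m → ℝ) (i : Fin m) (c : ℝ) (hxy : x ≤ y) :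
    Function.update x i c ≤ Function.update y i c := by
  intro j
  by_cases h : j = i
  · subst h; simp
  · rw [Function.update_of_ne h, Function.update_of_ne h]; exact hxy j

lemma update_zero_le_one {m : ℕ} (x : Fin m → ℝ) (i : Fin m) :
    Function.update x i 0 ≤ Function.update x i 1 := by
  intro j
  by_cases h : j = i
  · subst h; simp
  · rw [Function.update_of_ne h, Function.update_of_ne h]

lemma exists_bound {m : ℕ} (f : (Fin m → ℝ) → ℝ) :
    ∃ C : ℝ, ∀ x : Fin m → ℝ, BinaryVec x → |f x| ≤ C := by
  classical
  set T : Finset ℝ :=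
    Finset.univ.image fun s : Finset (Fin m) => |f (fun i => if i ∈ s then (1 : ℝ) else 0)|
  have hne : T.Nonempty := ⟨_, Finset.mem_image_of_mem _ (Finset.mem_univ (∅ : Finset (Fin m)))⟩
  refine ⟨T.max' hne, fun x hx => ?_⟩
  have hxe : x = fun i => if i ∈ Finset.univ.filter (fun i => x i = 1) then (1 : ℝ) else 0 := by
    funext i
    rcases hx i with h | h <;> simp [h]
  have : |f x| ∈ T := by
    rw [hxe]
    exact Finset.mem_image_of_mem _ (Finset.mem_univ _)
  exact Finset.le_max' _ _ this

/-- One-step decoupling: replacing X₁ by an independent copy X₁* can only increase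
the exponential moment E[exp(λ·f(X))] for monotone submodular f and λ < 0. -/
theorem one_step_decoupling {Ω : Type*} [MeasurableSpace Ω] (μ : Measure Ω)
    [IsProbabilityMeasure μ] {n : ℕ} (X : Fin (n + 1) → Ω → ℝ)
    (hX : ∀ i, Measurable (X i)) (hbin : ∀ i ω, X i ω = 0 ∨ X i ω = 1)
    (hNA : OneNA μ X)
    (Y : Ω → ℝ) (hY : Measurable Y)
    (hYindep : IndepFun Y (fun ω => fun j : Fin n => X j.succ ω) μ)
    (hYmarg : Measure.map Y μ = Measure.map (X 0) μ)
    (f : (Fin (n + 1) → ℝ) → ℝ) (hfmeas : Measurable f)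
    (hfmono : MonoCube f) (hfsub : SubmodCube f) (l : ℝ) (hl : l < 0) :
    ∫ ω, Real.exp (l * f (fun j => X j ω)) ∂μ ≤
      ∫ ω, Real.exp (l * f (Function.update (fun j => X j ω) 0 (Y ω))) ∂μ := by
  classical
  obtain ⟨C, hC⟩ := exists_bound f
  set A : (Fin (n + 1) → ℝ) → ℝ := fun x => Real.exp (l * f (Function.update x 0 0)) with hA
  set Fm : (Fin (n + 1) → ℝ) → ℝ :=
    fun x => Real.exp (l * f (Function.update x 0 1)) - A x with hFm
  have hAmeas : Measurable A := ((hfmeas.comp measurable_update_left).const_mul l).exp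
  have hFmeas : Measurable Fm :=
    (((hfmeas.comp measurable_update_left).const_mul l).exp).sub hAmeas
  -- bound on exponentials over binary vectors
  have hexp_bound : ∀ x : Fin (n + 1) → ℝ, BinaryVec x →
      ∀ c : ℝ, c = 0 ∨ c = 1 →
      |Real.exp (l * f (Function.update x 0 c))| ≤ Real.exp (|l| * C) := by
    intro x hx c hc
    have hb := binary_update x 0 c hx hc
    have h1 : |f (Function.update x 0 c)| ≤ C := hC _ hb
    have h0 : (0:ℝ) ≤ C := le_trans (abs_nonneg _) h1
    rw [abs_of_pos (Real.exp_pos _)]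
    apply Real.exp_le_exp.mpr
    calc l * f (Function.update x 0 c) ≤ |l * f (Function.update x 0 c)| := le_abs_self _
      _ = |l| * |f (Function.update x 0 c)| := abs_mul _ _
      _ ≤ |l| * C := by exact mul_le_mul_of_nonneg_left h1 (abs_nonneg l)
  have hAbound : ∀ x, BinaryVec x → |A x| ≤ Real.exp (|l| * C) := fun x hx =>
    hexp_bound x hx 0 (Or.inl rfl)
  have hFbound : ∀ x, BinaryVec x → |Fm x| ≤ 2 * Real.exp (|l| * C) := by
    intro x hx
    have h1 := hexp_bound x hx 1 (Or.inr rfl)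
    have h0 := hAbound x hx
    calc |Fm x| ≤ |Real.exp (l * f (Function.update x 0 1))| + |A x| := abs_sub _ _
      _ ≤ 2 * Real.exp (|l| * C) := by linarith
  have hXvec : Measurable fun ω => fun j => X j ω := measurable_pi_lambda _ hX
  have hbinX : ∀ ω, BinaryVec fun j => X j ω := fun ω i => hbin i ω
  -- monotonicity of Fm on the cube
  have hFmMono : MonoCube Fm := by
    intro x y hx hy hxy
    exact key_ineq l (f (Function.update x 0 0)) (f (Function.update x 0 1))
      (f (Function.update y 0 0)) (f (Function.update y 0 1)) hl
      (hfmono _ _ (binary_update y 0 0 hy (Or.inl rfl)) (binary_update y 0 1 hy (Or.inr rfl))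
        (update_zero_le_one y 0))
      (hfmono _ _ (binary_update x 0 0 hx (Or.inl rfl)) (binary_update y 0 0 hy (Or.inl rfl))
        (update_le_update x y 0 0 hxy))
      (hfsub 0 x y hx hy hxy)
  -- Fm depends only on coordinates ≠ 0
  have hFminv : ∀ x y : Fin (n + 1) → ℝ, (∀ j, j ≠ (0 : Fin (n + 1)) → x j = y j) → Fm x = Fm y := by
    intro x y h
    have hu : ∀ c : ℝ, Function.update x 0 c = Function.update y 0 c := by
      intro c; funext j
      by_cases hj : j = 0
      · subst hj; simp
      · rw [Function.update_of_ne hj, Function.update_of_ne hj]; exact h j hj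
    simp only [hFm, hA, hu]
  -- integrability
  have hintA : Integrable (fun ω => A (fun j => X j ω)) μ :=
    ⟨(hAmeas.comp hXvec).aestronglyMeasurable,
     HasFiniteIntegral.of_bounded (C := Real.exp (|l| * C))
       (ae_of_all _ fun ω => hAbound _ (hbinX ω))⟩
  have hintF : Integrable (fun ω => Fm (fun j => X j ω)) μ :=
    ⟨(hFmeas.comp hXvec).aestronglyMeasurable,
     HasFiniteIntegral.of_bounded (C := 2 * Real.exp (|l| * C))
       (ae_of_all _ fun ω => hFbound _ (hbinX ω))⟩
  have habs01 : ∀ t : ℝ, t = 0 ∨ t = 1 → |t| ≤ 1 := by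
    rintro t (rfl | rfl) <;> norm_num
  have hintXF : Integrable (fun ω => X 0 ω * Fm (fun j => X j ω)) μ :=
    ⟨((hX 0).mul (hFmeas.comp hXvec)).aestronglyMeasurable,
     HasFiniteIntegral.of_bounded (C := 2 * Real.exp (|l| * C))
       (ae_of_all _ fun ω => by
         have h1 := hFbound _ (hbinX ω)
         have h2 := habs01 _ (hbin 0 ω)
         calc ‖X 0 ω * Fm fun j => X j ω‖ = |X 0 ω| * |Fm fun j => X j ω| := abs_mul _ _
           _ ≤ 1 * (2 * Real.exp (|l| * C)) :=
             mul_le_mul h2 h1 (abs_nonneg _) zero_le_one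
           _ = 2 * Real.exp (|l| * C) := one_mul _)⟩
  -- Y is a.e. binary
  have hYbin : ∀ᵐ ω ∂μ, Y ω = 0 ∨ Y ω = 1 := by
    have hms : MeasurableSet ({0, 1} : Set ℝ) :=
      (measurableSet_singleton 0).union (measurableSet_singleton 1)
    have h0 : μ (Y ⁻¹' ({0, 1} : Set ℝ)ᶜ) = 0 := by
      rw [← Measure.map_apply hY hms.compl, hYmarg, Measure.map_apply (hX 0) hms.compl]
      have : X 0 ⁻¹' ({0, 1} : Set ℝ)ᶜ = ∅ := by
        ext ω
        simp only [Set.mem_preimage, Set.mem_compl_iff, Set.mem_insert_iff,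
          Set.mem_singleton_iff, Set.mem_empty_iff_false, iff_false, not_not]
        exact hbin 0 ω
      simp [this]
    have : ∀ᵐ ω ∂μ, Y ω ∈ ({0, 1} : Set ℝ) := by
      rw [ae_iff]
      exact h0
    filter_upwards [this] with ω hω
    simpa using hω
  have hYint : Integrable Y μ :=
    ⟨hY.aestronglyMeasurable,
     HasFiniteIntegral.of_bounded (C := 1)
       (hYbin.mono fun ω hω => habs01 _ hω)⟩
  have hintYF : Integrable (fun ω => Y ω * Fm (fun j => X j ω)) μ :=
    ⟨(hY.mul (hFmeas.comp hXvec)).aestronglyMeasurable,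
     HasFiniteIntegral.of_bounded (C := 2 * Real.exp (|l| * C))
       (hYbin.mono fun ω hω => by
         have h1 := hFbound _ (hbinX ω)
         calc ‖Y ω * Fm fun j => X j ω‖ = |Y ω| * |Fm fun j => X j ω| := abs_mul _ _
           _ ≤ 1 * (2 * Real.exp (|l| * C)) :=
             mul_le_mul (habs01 _ hω) h1 (abs_nonneg _) zero_le_one
           _ = 2 * Real.exp (|l| * C) := one_mul _)⟩
  -- pointwise decomposition
  have hpt : ∀ (x : Fin (n + 1) → ℝ) (t : ℝ), t = 0 ∨ t = 1 →
      Real.exp (l * f (Function.update x 0 t)) = A x + t * Fm x := by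
    rintro x t (rfl | rfl) <;> simp [hFm, hA] <;> ring
  -- LHS decomposition
  have hLHS : ∫ ω, Real.exp (l * f (fun j => X j ω)) ∂μ =
      (∫ ω, A (fun j => X j ω) ∂μ) + ∫ ω, X 0 ω * Fm (fun j => X j ω) ∂μ := by
    rw [← integral_add hintA hintXF]
    apply integral_congr_ae
    apply ae_of_all
    intro ω
    have hx : (fun j => X j ω) = Function.update (fun j => X j ω) 0 (X 0 ω) :=
      (Function.update_eq_self 0 _).symm
    calc Real.exp (l * f (fun j => X j ω))
        = Real.exp (l * f (Function.update (fun j => X j ω) 0 (X 0 ω))) := by rw [← hx]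
      _ = A (fun j => X j ω) + X 0 ω * Fm (fun j => X j ω) := hpt _ _ (hbin 0 ω)
  -- RHS decomposition
  have hRHS : ∫ ω, Real.exp (l * f (Function.update (fun j => X j ω) 0 (Y ω))) ∂μ =
      (∫ ω, A (fun j => X j ω) ∂μ) + ∫ ω, Y ω * Fm (fun j => X j ω) ∂μ := by
    rw [← integral_add hintA hintYF]
    apply integral_congr_ae
    filter_upwards [hYbin] with ω hω
    exact hpt _ _ hω
  -- independence step
  set Z : Ω → Fin n → ℝ := fun ω => fun j : Fin n => X j.succ ω with hZ
  have hconsm : ∀ c : ℝ, Measurable fun z : Fin n → ℝ => (Fin.cons c z : Fin (n+1) → ℝ) := by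
    intro c
    apply measurable_pi_lambda
    intro j
    refine Fin.cases ?_ ?_ j
    · simpa using measurable_const
    · intro k; simpa using measurable_pi_apply k
  set Φ : (Fin n → ℝ) → ℝ := fun z =>
    Real.exp (l * f (Fin.cons 1 z)) - Real.exp (l * f (Fin.cons 0 z)) with hΦ
  have hΦmeas : Measurable Φ :=
    (((hfmeas.comp (hconsm 1)).const_mul l).exp).sub (((hfmeas.comp (hconsm 0)).const_mul l).exp)
  have hcons : ∀ (x : Fin (n + 1) → ℝ) (c : ℝ),
      Function.update x 0 c = Fin.cons c (fun j => x j.succ) := by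
    intro x c
    funext j
    refine Fin.cases ?_ ?_ j
    · simp
    · intro k
      rw [Function.update_of_ne (Fin.succ_ne_zero k)]
      simp
  have hFmΦ : ∀ ω, Fm (fun j => X j ω) = Φ (Z ω) := by
    intro ω
    simp only [hFm, hA, hΦ, hZ, hcons]
  have hindep2 : IndepFun Y (fun ω => Φ (Z ω)) μ :=
    hYindep.comp measurable_id hΦmeas
  have hintΦ : Integrable (fun ω => Φ (Z ω)) μ := by
    have := hintF
    simp only [hFmΦ] at this
    exact this
  have hind : ∫ ω, Y ω * Fm (fun j => X j ω) ∂μ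
      = (∫ ω, Y ω ∂μ) * ∫ ω, Fm (fun j => X j ω) ∂μ := by
    simp only [hFmΦ]
    exact hindep2.integral_fun_mul_eq_mul_integral hYint.aestronglyMeasurable hintΦ.aestronglyMeasurable
  -- same marginal
  have hYeq : ∫ ω, Y ω ∂μ = ∫ ω, X 0 ω ∂μ := by
    have h1 : ∫ ω, Y ω ∂μ = ∫ x, x ∂(Measure.map Y μ) :=
      (integral_map hY.aemeasurable aestronglyMeasurable_id).symm
    rw [h1, hYmarg]
    exact integral_map (hX 0).aemeasurable aestronglyMeasurable_id
  -- negative association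
  have hNAapp := hNA 0 Fm id hFmeas hFmMono hFminv measurable_id monotone_id
  simp only [id] at hNAapp
  have hcomm : ∫ ω, X 0 ω * Fm (fun j => X j ω) ∂μ
      = ∫ ω, Fm (fun j => X j ω) * X 0 ω ∂μ := by
    apply integral_congr_ae
    exact ae_of_all _ fun ω => mul_comm _ _
  rw [hLHS, hRHS, hind, hYeq, hcomm]
  have : (∫ ω, X 0 ω ∂μ) * ∫ ω, Fm (fun j => X j ω) ∂μ
      = (∫ ω, Fm (fun j => X j ω) ∂μ) * ∫ ω, X 0 ω ∂μ := mul_comm _ _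
  rw [this]
  linarith [hNAapp]
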